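/- Let T be a thick locally finite tree, let G ≤ Aut(T), let x and v be distinct vertices, and let i ≥ 0. Then: (i) Θ(v,x,i) is a normal subgroup of the image of G(v,x) acting on S_v(x,1); (ii) if w is a neighbour of v with d(w,x) = d(v,x) + 1, then S_w(x,1) = S_v(x,1) and Θ(w,x,i) is a normal subgroup of Θ(v,x,i); consequently, Θ(v,x,i) is a subnormal subgroup of the image of the arc stabilizer G(x,x') acting on S_v(x,1), where x' is the neighbour of x on the geodesic from x to v. -/

import Mathlib

/-- The pointwise stabilizer of a set of vertices, inside the full symmetric group. -/
def ptStab {V : Type*} (s : Set V) : Subgroup (Equiv.Perm V) where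
  carrier := {g | ∀ v ∈ s, g v = v}
  one_mem' := by intro v _; rfl
  mul_mem' := by
    intro a b ha hb v hv
    simp only [Set.mem_setOf_eq] at *
    rw [Equiv.Perm.mul_apply, hb v hv, ha v hv]
  inv_mem' := by
    intro a ha v hv
    simp only [Set.mem_setOf_eq] at *
    calc a⁻¹ v = a⁻¹ (a v) := by rw [ha v hv]
      _ = v := a.symm_apply_apply v

/-- `G` consists of automorphisms of the graph `T`. -/
def PreservesAdj {V : Type*} (T : SimpleGraph V) (G : Subgroup (Equiv.Perm V)) : Prop :=
  ∀ g ∈ G, ∀ a b : V, T.Adj a b ↔ T.Adj (g a) (g b)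

/-- `G` is `k`-type-distance-transitive. -/
def TypeDistTrans {V : Type*} (T : SimpleGraph V) (G : Subgroup (Equiv.Perm V)) (k : ℕ) : Prop :=
  ∀ x y x' y' : V, T.dist x y = k → T.dist x' y' = k → Even (T.dist x x') →
    ∃ g ∈ G, g x = x' ∧ g y = y'

/-- The tree is thick: every vertex has at least three neighbours. -/
def Thick {V : Type*} (T : SimpleGraph V) : Prop :=
  ∀ v : V, ∃ a b c : V, T.Adj v a ∧ T.Adj v b ∧ T.Adj v c ∧ a ≠ b ∧ a ≠ c ∧ b ≠ c

/-- `N` is subnormal in `H`: a finite chain of successive normal inclusions joins them. -/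
def SubnormalIn {X : Type*} [Group X] (N H : Subgroup X) : Prop :=
  ∃ (m : ℕ) (c : ℕ → Subgroup X), c 0 = N ∧ c m = H ∧
    ∀ i < m, c i ≤ c (i + 1) ∧ ∀ g ∈ c (i + 1), ∀ n ∈ c i, g * n * g⁻¹ ∈ c i

/-- `Θ(w, x, i)`: the local action at `x` (on the neighbours of `x` other than `x'`) of
the pointwise stabilizer in `G` of `{x} ∪ B^w_i(x)`, where `B^w_i(x)` is the set of
vertices `u` with `d(w,u) = d(w,x) + i` such that `x` does not lie on the geodesic from
`w` to `u`. -/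
def Theta {V : Type*} (T : SimpleGraph V) (G : Subgroup (Equiv.Perm V)) (x x' : V)
    (res : ↥(G ⊓ ptStab {x} ⊓ ptStab {x'}) →* Equiv.Perm {u : V // T.Adj x u ∧ u ≠ x'})
    (w : V) (i : ℕ) : Subgroup (Equiv.Perm {u : V // T.Adj x u ∧ u ≠ x'}) :=
  Subgroup.map res
    ((ptStab {u : V | T.dist w u = T.dist w x + i ∧
        T.dist w x + T.dist x u ≠ T.dist w u}).comap
      (G ⊓ ptStab {x} ⊓ ptStab {x'}).subtype)

section Kit
variable {V : Type*} {T : SimpleGraph V}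

/-- In a tree, every path realizes the distance. -/
lemma tree_path_length (hconn : T.Connected) (hacyc : T.IsAcyclic) {a b : V}
    (p : T.Walk a b) (hp : p.IsPath) : p.length = T.dist a b := by
  obtain ⟨q, hq, hql⟩ := hconn.exists_path_of_dist a b
  have h := hacyc.path_unique ⟨p, hp⟩ ⟨q, hq⟩
  have : p = q := congrArg Subtype.val h
  rw [this]; exact hql

lemma dist_getVert_le (hconn : T.Connected) {a b : V} (p : T.Walk a b) :
    ∀ i j : ℕ, i ≤ j → T.dist (p.getVert i) (p.getVert j) ≤ j - i := by
  induction p with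
  | nil =>
    intro i j _
    rw [SimpleGraph.Walk.getVert_of_length_le _ (Nat.zero_le _),
      SimpleGraph.Walk.getVert_of_length_le _ (Nat.zero_le _)]
    simp [SimpleGraph.dist_self]
  | @cons u v w h q ih =>
    intro i j hij
    cases i with
    | zero =>
      cases j with
      | zero => simp
      | succ j =>
        rw [SimpleGraph.Walk.getVert_cons_succ]
        have h1 : T.dist u v = 1 := by rwa [SimpleGraph.dist_eq_one_iff_adj]
        have := hconn.dist_triangle (u := u) (v := v) (w := q.getVert j)
        have h2 := ih 0 j (Nat.zero_le _)
        rw [SimpleGraph.Walk.getVert_zero] at h2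
        simp only [SimpleGraph.Walk.getVert_zero]
        omega
    | succ i =>
      cases j with
      | zero => omega
      | succ j =>
        rw [SimpleGraph.Walk.getVert_cons_succ, SimpleGraph.Walk.getVert_cons_succ]
        have := ih i j (by omega)
        omega

/-- On a geodesic path, distances to the endpoints of `getVert k`. -/
lemma geo_getVert_dist (hconn : T.Connected) (hacyc : T.IsAcyclic) {a b : V}
    (p : T.Walk a b) (hp : p.IsPath) {k : ℕ} (hk : k ≤ p.length) :
    T.dist a (p.getVert k) = k ∧ T.dist (p.getVert k) b = p.length - k := by
  have h1 := dist_getVert_le hconn p 0 k (Nat.zero_le _)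
  have h2 := dist_getVert_le hconn p k p.length hk
  rw [SimpleGraph.Walk.getVert_zero] at h1
  rw [SimpleGraph.Walk.getVert_length] at h2
  have h3 := hconn.dist_triangle (u := a) (v := p.getVert k) (w := b)
  have h4 := tree_path_length hconn hacyc p hp
  omega

/-- `m` lies between `a` and `c`. -/
def TBtw (T : SimpleGraph V) (a m c : V) : Prop :=
  T.dist a m + T.dist m c = T.dist a c

lemma btw_getVert (hconn : T.Connected) (hacyc : T.IsAcyclic) {a m c : V}
    (h : TBtw T a m c) (p : T.Walk a c) (hp : p.IsPath) :
    p.getVert (T.dist a m) = m := by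
  obtain ⟨p1, hp1, hl1⟩ := hconn.exists_path_of_dist a m
  obtain ⟨p2, hp2, hl2⟩ := hconn.exists_path_of_dist m c
  have hW : (p1.append p2).length = T.dist a c := by
    rw [SimpleGraph.Walk.length_append, hl1, hl2]; exact h
  have hWp : (p1.append p2).IsPath := SimpleGraph.Walk.isPath_of_length_eq_dist _ hW
  have heq : p = p1.append p2 :=
    congrArg Subtype.val (hacyc.path_unique ⟨p, hp⟩ ⟨p1.append p2, hWp⟩)
  rw [heq, SimpleGraph.Walk.getVert_append]
  rw [hl1]
  simp

/-- Uniqueness of the point at a given distance between two vertices (trees). -/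
lemma btw_unique (hconn : T.Connected) (hacyc : T.IsAcyclic) {a m1 m2 c : V}
    (h1 : TBtw T a m1 c) (h2 : TBtw T a m2 c) (hd : T.dist a m1 = T.dist a m2) :
    m1 = m2 := by
  obtain ⟨p, hp, _⟩ := hconn.exists_path_of_dist a c
  have e1 := btw_getVert hconn hacyc h1 p hp
  have e2 := btw_getVert hconn hacyc h2 p hp
  rw [hd] at e1; exact e1.symm.trans e2

lemma btw_left (hconn : T.Connected) (hacyc : T.IsAcyclic) {a m1 m2 c : V}
    (h1 : TBtw T a m1 c) (h2 : TBtw T a m2 c) (hd : T.dist a m1 ≤ T.dist a m2) :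
    TBtw T a m1 m2 := by
  obtain ⟨p, hp, hpl⟩ := hconn.exists_path_of_dist a c
  have e1 := btw_getVert hconn hacyc h1 p hp
  have e2 := btw_getVert hconn hacyc h2 p hp
  have hk2 : T.dist a m2 ≤ p.length := by
    have : T.dist a m2 ≤ T.dist a c := by unfold TBtw at h2; omega
    omega
  have h3 : T.dist m1 m2 ≤ T.dist a m2 - T.dist a m1 := by
    have := dist_getVert_le hconn p (T.dist a m1) (T.dist a m2) hd
    rwa [e1, e2] at this
  have h4 := hconn.dist_triangle (u := a) (v := m1) (w := m2)
  unfold TBtw; omega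

/-- Dichotomy: a neighbour `u` of `x` is either "farther" from `y` or on the geodesic. -/
lemma adj_dist_dichotomy (hconn : T.Connected) (hacyc : T.IsAcyclic) {x u : V}
    (h : T.Adj x u) (y : V) :
    T.dist u y = T.dist x y + 1 ∨ (TBtw T x u y ∧ T.dist u y + 1 = T.dist x y) := by
  obtain ⟨p, hp, hpl⟩ := hconn.exists_path_of_dist x y
  have hdxu : T.dist x u = 1 := by rwa [SimpleGraph.dist_eq_one_iff_adj]
  by_cases hu : u ∈ p.support
  · right
    obtain ⟨n, hn, hnle⟩ := SimpleGraph.Walk.mem_support_iff_exists_getVert.mp hu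
    obtain ⟨d1, d2⟩ := geo_getVert_dist hconn hacyc p hp hnle
    rw [hn] at d1 d2
    have hbtw : TBtw T x u y := by unfold TBtw; omega
    have : n = 1 := by omega
    refine ⟨hbtw, ?_⟩
    unfold TBtw at hbtw; omega
  · left
    have hq : (p.cons h.symm).IsPath := hp.cons hu
    have := tree_path_length hconn hacyc _ hq
    rw [SimpleGraph.Walk.length_cons] at this
    omega

/-- At most one neighbour of `x` is on the geodesic towards `y`. -/
lemma toward_unique (hconn : T.Connected) (hacyc : T.IsAcyclic) {x n1 n2 y : V}
    (h1 : T.Adj x n1) (h2 : T.Adj x n2)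
    (b1 : TBtw T x n1 y) (b2 : TBtw T x n2 y) : n1 = n2 := by
  apply btw_unique hconn hacyc b1 b2
  rw [SimpleGraph.dist_eq_one_iff_adj.mpr h1, SimpleGraph.dist_eq_one_iff_adj.mpr h2]

/-- In a thick tree there is a neighbour moving away from two given anchors at once. -/
lemma exists_good_neighbor (hconn : T.Connected) (hacyc : T.IsAcyclic)
    (hthick : Thick T) (p q u : V) :
    ∃ n, T.Adj u n ∧ T.dist p n = T.dist p u + 1 ∧ T.dist q n = T.dist q u + 1 := by
  obtain ⟨A, B, C, hA, hB, hC, hAB, hAC, hBC⟩ := hthick u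
  have hdi : ∀ z, T.Adj u z →
      (T.dist p z = T.dist p u + 1 ∧ T.dist q z = T.dist q u + 1) ∨
      TBtw T u z p ∨ TBtw T u z q := by
    intro z hz
    rcases adj_dist_dichotomy hconn hacyc hz p with h1 | h1
    · rcases adj_dist_dichotomy hconn hacyc hz q with h2 | h2
      · left
        constructor
        · rw [SimpleGraph.dist_comm (u := p) (v := z), SimpleGraph.dist_comm (u := p) (v := u)]; exact h1
        · rw [SimpleGraph.dist_comm (u := q) (v := z), SimpleGraph.dist_comm (u := q) (v := u)]; exact h2
      · right; right; exact h2.1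
    · right; left; exact h1.1
  rcases hdi A hA with hA' | hA' | hA' <;> rcases hdi B hB with hB' | hB' | hB' <;>
    rcases hdi C hC with hC' | hC' | hC'
  all_goals first
    | exact ⟨A, hA, hA'.1, hA'.2⟩
    | exact ⟨B, hB, hB'.1, hB'.2⟩
    | exact ⟨C, hC, hC'.1, hC'.2⟩
    | exact absurd (toward_unique hconn hacyc hA hB hA' hB') hAB
    | exact absurd (toward_unique hconn hacyc hA hC hA' hC') hAC
    | exact absurd (toward_unique hconn hacyc hB hC hB' hC') hBC

/-- Extension lemma: from `u` one can move `t` further away from both anchors. -/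
lemma ext_lemma (hconn : T.Connected) (hacyc : T.IsAcyclic) (hthick : Thick T)
    (p q u : V) (t : ℕ) :
    ∃ u', T.dist p u' = T.dist p u + t ∧ T.dist q u' = T.dist q u + t ∧
      T.dist u u' = t := by
  induction t with
  | zero => exact ⟨u, by simp, by simp, by simp⟩
  | succ t ih =>
    obtain ⟨w, hwp, hwq, hwu⟩ := ih
    obtain ⟨n, hn, hnp, hnq⟩ := exists_good_neighbor hconn hacyc hthick p q w
    refine ⟨n, by omega, by omega, ?_⟩
    have h1 : T.dist u n ≤ t + 1 := by
      have := hconn.dist_triangle (u := u) (v := w) (w := n)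
      have := SimpleGraph.dist_eq_one_iff_adj.mpr hn
      omega
    have h2 := hconn.dist_triangle (u := p) (v := u) (w := n)
    omega

/-- A permutation preserving adjacency preserves distances. -/
lemma perm_dist (hconn : T.Connected) (σ : Equiv.Perm V)
    (hσ : ∀ a b, T.Adj a b ↔ T.Adj (σ a) (σ b)) :
    ∀ a b, T.dist (σ a) (σ b) = T.dist a b := by
  have key : ∀ (τ : Equiv.Perm V), (∀ a b, T.Adj a b ↔ T.Adj (τ a) (τ b)) →
      ∀ a b, T.dist (τ a) (τ b) ≤ T.dist a b := by
    intro τ hτ a b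
    obtain ⟨w, hw⟩ := hconn.exists_walk_length_eq_dist a b
    let F : T →g T := ⟨τ.toFun, fun h => (hτ _ _).mp h⟩
    calc T.dist (τ a) (τ b) ≤ (w.map F).length := SimpleGraph.dist_le _
      _ = w.length := SimpleGraph.Walk.length_map _ _
      _ = T.dist a b := hw
  intro a b
  have h1 := key σ hσ a b
  have hσ' : ∀ a b, T.Adj a b ↔ T.Adj (σ⁻¹ a) (σ⁻¹ b) := by
    intro a b
    have := hσ (σ⁻¹ a) (σ⁻¹ b)
    simpa using this.symm
  have h2 := key σ⁻¹ hσ' (σ a) (σ b)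
  simp only [Equiv.Perm.inv_def, Equiv.symm_apply_apply] at h2
  omega

lemma fix_of_fix_B (hconn : T.Connected) (hacyc : T.IsAcyclic) (hthick : Thick T)
    {σ : Equiv.Perm V} (hd : ∀ a b, T.dist (σ a) (σ b) = T.dist a b)
    {x v : V} (hx : σ x = x) (hxv : x ≠ v) (i : ℕ)
    (hB : ∀ u, T.dist v u = T.dist v x + i → T.dist v x + T.dist x u ≠ T.dist v u → σ u = u) :
    σ v = v ∧ ∀ w, T.Adj v w → T.dist w x = T.dist v x + 1 → σ w = w := by
  have hdvx : 0 < T.dist v x := by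
    rw [SimpleGraph.dist_comm]; exact hconn.pos_dist_of_ne hxv
  have key : ∀ w, T.Adj v w → T.dist w x = T.dist v x + 1 → σ w = w ∧ σ v = v := by
    intro w hw hwx
    obtain ⟨u', h1, h2, h3⟩ := ext_lemma hconn hacyc hthick v x w (T.dist v x + i - 1)
    have hvw1 : T.dist v w = 1 := SimpleGraph.dist_eq_one_iff_adj.mpr hw
    have hxw : T.dist x w = T.dist v x + 1 := by
      rw [SimpleGraph.dist_comm]; exact hwx
    have hvu' : T.dist v u' = T.dist v x + i := by omega
    have hxu' : T.dist x u' = T.dist v x + (T.dist v x + i) := by omega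
    have hfix : σ u' = u' := hB u' hvu' (by omega)
    have hxv' : T.dist x v = T.dist v x := SimpleGraph.dist_comm
    have bw : TBtw T x w u' := by unfold TBtw; omega
    have bv : TBtw T x v u' := by unfold TBtw; omega
    have e1 : T.dist x (σ w) = T.dist x w := by have e := hd x w; rwa [hx] at e
    have e2 : T.dist (σ w) u' = T.dist w u' := by have e := hd w u'; rwa [hfix] at e
    have e3 : T.dist x (σ v) = T.dist x v := by have e := hd x v; rwa [hx] at e
    have e4 : T.dist (σ v) u' = T.dist v u' := by have e := hd v u'; rwa [hfix] at e
    have bw' : TBtw T x (σ w) u' := by unfold TBtw at bw ⊢; omega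
    have bv' : TBtw T x (σ v) u' := by unfold TBtw at bv ⊢; omega
    exact ⟨btw_unique hconn hacyc bw' bw e1, btw_unique hconn hacyc bv' bv e3⟩
  obtain ⟨n, hn, hn1, hn2⟩ := exists_good_neighbor hconn hacyc hthick x x v
  have hnx : T.dist n x = T.dist v x + 1 := by
    have c1 : T.dist n x = T.dist x n := SimpleGraph.dist_comm
    have c2 : T.dist v x = T.dist x v := SimpleGraph.dist_comm
    omega
  exact ⟨(key n hn hnx).2, fun w hw hwx => (key w hw hwx).1⟩

lemma fix_B_of_fix_B (hconn : T.Connected) (hacyc : T.IsAcyclic) (hthick : Thick T)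
    {σ : Equiv.Perm V} (hd : ∀ a b, T.dist (σ a) (σ b) = T.dist a b)
    {x v w : V} (hx : σ x = x) (hvw : T.Adj v w)
    (hwx : T.dist w x = T.dist v x + 1) (i : ℕ)
    (hBw : ∀ u, T.dist w u = T.dist w x + i → T.dist w x + T.dist x u ≠ T.dist w u → σ u = u) :
    ∀ u, T.dist v u = T.dist v x + i → T.dist v x + T.dist x u ≠ T.dist v u → σ u = u := by
  intro u h1 h2
  have tri := hconn.dist_triangle (u := v) (v := x) (w := u)
  have hxu_lb : i + 1 ≤ T.dist x u := by omega
  rcases adj_dist_dichotomy hconn hacyc hvw u with h3 | h3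
  · exact hBw u (by omega) (by omega)
  · obtain ⟨hb3, h3⟩ := h3
    obtain ⟨u'', k1, k2, k3⟩ := ext_lemma hconn hacyc hthick w x u 2
    have hfix : σ u'' = u'' := hBw u'' (by omega) (by omega)
    have bu : TBtw T x u u'' := by unfold TBtw; omega
    have e1 : T.dist x (σ u) = T.dist x u := by have e := hd x u; rwa [hx] at e
    have e2 : T.dist (σ u) u'' = T.dist u u'' := by have e := hd u u''; rwa [hfix] at e
    have bu' : TBtw T x (σ u) u'' := by unfold TBtw at bu ⊢; omega
    exact btw_unique hconn hacyc bu' bu e1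

lemma sphere_iff (hconn : T.Connected) (hacyc : T.IsAcyclic)
    {x v w u : V} (hxv : x ≠ v) (hvw : T.Adj v w)
    (hwx : T.dist w x = T.dist v x + 1) (hu : T.Adj x u) :
    T.dist u w = T.dist x w + 1 ↔ T.dist u v = T.dist x v + 1 := by
  have hdxv : 0 < T.dist x v := hconn.pos_dist_of_ne hxv
  have hvw1 : T.dist v w = 1 := SimpleGraph.dist_eq_one_iff_adj.mpr hvw
  have hxu : T.dist x u = 1 := SimpleGraph.dist_eq_one_iff_adj.mpr hu
  have hxw : T.dist x w = T.dist x v + 1 := by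
    have c1 : T.dist x w = T.dist w x := SimpleGraph.dist_comm
    have c2 : T.dist v x = T.dist x v := SimpleGraph.dist_comm
    omega
  constructor
  · intro h
    rcases adj_dist_dichotomy hconn hacyc hu v with h2 | h2
    · exact h2
    · exfalso
      have tri := hconn.dist_triangle (u := u) (v := v) (w := w)
      obtain ⟨-, h2⟩ := h2
      omega
  · intro h
    rcases adj_dist_dichotomy hconn hacyc hu w with h2 | h2
    · exact h2
    · exfalso
      have hbvw : TBtw T x v w := by unfold TBtw; omega
      have h3 := btw_left hconn hacyc h2.1 hbvw (by omega : T.dist x u ≤ T.dist x v)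
      unfold TBtw at h3; omega

end Kit

lemma mem_ptStab {V : Type*} {s : Set V} {g : Equiv.Perm V} :
    g ∈ ptStab s ↔ ∀ v ∈ s, g v = v := Iff.rfl

lemma conj_mem_K {V : Type*} {T : SimpleGraph V} (hconn : T.Connected)
    {G : Subgroup (Equiv.Perm V)} (hG : PreservesAdj T G) (x x' : V)
    (h g : ↥(G ⊓ ptStab {x} ⊓ ptStab {x'})) (w : V) (i : ℕ)
    (hw : (h : Equiv.Perm V) w = w)
    (hg : g ∈ (ptStab {u : V | T.dist w u = T.dist w x + i ∧
        T.dist w x + T.dist x u ≠ T.dist w u}).comap (G ⊓ ptStab {x} ⊓ ptStab {x'}).subtype) :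
    h * g * h⁻¹ ∈ (ptStab {u : V | T.dist w u = T.dist w x + i ∧
        T.dist w x + T.dist x u ≠ T.dist w u}).comap (G ⊓ ptStab {x} ⊓ ptStab {x'}).subtype := by
  have hmem := h.2
  rw [Subgroup.mem_inf, Subgroup.mem_inf] at hmem
  have hhx : (h : Equiv.Perm V) x = x := mem_ptStab.mp hmem.1.2 x rfl
  have hdist := perm_dist hconn ((h : Equiv.Perm V)) (hG _ hmem.1.1)
  rw [Subgroup.mem_comap, mem_ptStab] at hg ⊢
  simp only [Subgroup.coe_subtype] at hg ⊢
  intro u hu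
  obtain ⟨hu1, hu2⟩ := hu
  have hz1 : T.dist w (((h : Equiv.Perm V))⁻¹ u) = T.dist w u := by
    have e := hdist w ((h : Equiv.Perm V)⁻¹ u)
    rw [hw, Equiv.Perm.inv_def, Equiv.apply_symm_apply] at e
    exact e.symm
  have hz2 : T.dist x (((h : Equiv.Perm V))⁻¹ u) = T.dist x u := by
    have e := hdist x ((h : Equiv.Perm V)⁻¹ u)
    rw [hhx, Equiv.Perm.inv_def, Equiv.apply_symm_apply] at e
    exact e.symm
  have hgz := hg (((h : Equiv.Perm V))⁻¹ u) ⟨by omega, by omega⟩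
  simp only [Subgroup.coe_mul, InvMemClass.coe_inv, Equiv.Perm.mul_apply]
  rw [hgz, Equiv.Perm.inv_def, Equiv.apply_symm_apply]

lemma theta_step {V : Type*} {T : SimpleGraph V} (hconn : T.Connected)
    (hacyc : T.IsAcyclic) (hthick : Thick T)
    {G : Subgroup (Equiv.Perm V)} (hG : PreservesAdj T G) (x x' v w : V)
    (res : ↥(G ⊓ ptStab {x} ⊓ ptStab {x'}) →* Equiv.Perm {u : V // T.Adj x u ∧ u ≠ x'})
    (hxv : x ≠ v) (hvw : T.Adj v w) (hwx : T.dist w x = T.dist v x + 1) (i : ℕ) :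
    Theta T G x x' res w i ≤ Theta T G x x' res v i ∧
      ∀ a ∈ Theta T G x x' res v i, ∀ m ∈ Theta T G x x' res w i,
        a * m * a⁻¹ ∈ Theta T G x x' res w i := by
  constructor
  · unfold Theta
    apply Subgroup.map_mono
    intro γ hγ
    rw [Subgroup.mem_comap, mem_ptStab] at hγ ⊢
    simp only [Subgroup.coe_subtype] at hγ ⊢
    have hmem := γ.2
    rw [Subgroup.mem_inf, Subgroup.mem_inf] at hmem
    have hdist := perm_dist hconn ((γ : Equiv.Perm V)) (hG _ hmem.1.1)
    intro u hu
    exact fix_B_of_fix_B hconn hacyc hthick hdist (mem_ptStab.mp hmem.1.2 x rfl)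
      hvw hwx i (fun u h1 h2 => hγ u ⟨h1, h2⟩) u hu.1 hu.2
  · intro a ha m hm
    unfold Theta at ha hm ⊢
    obtain ⟨h, hh, rfl⟩ := Subgroup.mem_map.mp ha
    obtain ⟨g, hg, rfl⟩ := Subgroup.mem_map.mp hm
    have hmem := h.2
    rw [Subgroup.mem_inf, Subgroup.mem_inf] at hmem
    have hdist := perm_dist hconn ((h : Equiv.Perm V)) (hG _ hmem.1.1)
    have hh' := hh
    rw [Subgroup.mem_comap, mem_ptStab] at hh'
    simp only [Subgroup.coe_subtype] at hh'
    have hfixw : (h : Equiv.Perm V) w = w :=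
      (fix_of_fix_B hconn hacyc hthick hdist (mem_ptStab.mp hmem.1.2 x rfl) hxv i
        (fun u h1 h2 => hh' u ⟨h1, h2⟩)).2 w hvw hwx
    exact Subgroup.mem_map.mpr ⟨h * g * h⁻¹,
      conj_mem_K hconn hG x x' h g w i hfixw hg,
      by rw [map_mul, map_mul, map_inv]⟩

/-- With `x' ` the neighbour of `x` on the geodesic from `x` to `v`
(so that `S_v(x,1)` is the set of neighbours of `x` other than `x'`):
(i) `Θ(v,x,i)` is a normal subgroup of the image of `G(v,x)` acting on `S_v(x,1)`;
(ii) if `w` is a neighbour of `v` with `d(w,x) = d(v,x)+1`, then `S_w(x,1) = S_v(x,1)`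
and `Θ(w,x,i)` is a normal subgroup of `Θ(v,x,i)`; consequently `Θ(v,x,i)` is subnormal
in the image of the arc stabilizer `G(x,x')` acting on `S_v(x,1)`. -/
theorem theta_subnormal
    {V : Type*} (T : SimpleGraph V) (hconn : T.Connected) (hacyc : T.IsAcyclic)
    (hthick : Thick T) (hlf : ∀ u : V, (T.neighborSet u).Finite)
    (G : Subgroup (Equiv.Perm V)) (hG : PreservesAdj T G)
    (x v : V) (hxv : x ≠ v) (i : ℕ)
    (x' : V) (hadj : T.Adj x x') (hgeo : T.dist x v = T.dist x' v + 1)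
    (res : ↥(G ⊓ ptStab {x} ⊓ ptStab {x'}) →* Equiv.Perm {u : V // T.Adj x u ∧ u ≠ x'})
    (hres : ∀ (g : ↥(G ⊓ ptStab {x} ⊓ ptStab {x'})) (u : {u : V // T.Adj x u ∧ u ≠ x'}),
        ((res g) u : V) = (g : Equiv.Perm V) (u : V)) :
    (Theta T G x x' res v i ≤
        Subgroup.map res ((ptStab {v}).comap (G ⊓ ptStab {x} ⊓ ptStab {x'}).subtype) ∧
      ∀ a ∈ Subgroup.map res ((ptStab {v}).comap (G ⊓ ptStab {x} ⊓ ptStab {x'}).subtype),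
        ∀ m ∈ Theta T G x x' res v i, a * m * a⁻¹ ∈ Theta T G x x' res v i) ∧
    (∀ w : V, T.Adj v w → T.dist w x = T.dist v x + 1 →
      ({u : V | T.Adj x u ∧ T.dist u w = T.dist x w + 1} =
        {u : V | T.Adj x u ∧ T.dist u v = T.dist x v + 1}) ∧
      Theta T G x x' res w i ≤ Theta T G x x' res v i ∧
      ∀ a ∈ Theta T G x x' res v i, ∀ m ∈ Theta T G x x' res w i,
        a * m * a⁻¹ ∈ Theta T G x x' res w i) ∧
    SubnormalIn (Theta T G x x' res v i) res.range := by
  classical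
  have hfacts : ∀ γ : ↥(G ⊓ ptStab {x} ⊓ ptStab {x'}),
      (γ : Equiv.Perm V) x = x ∧ (γ : Equiv.Perm V) x' = x' ∧
        ∀ a b, T.dist ((γ : Equiv.Perm V) a) ((γ : Equiv.Perm V) b) = T.dist a b := by
    intro γ
    have hmem := γ.2
    rw [Subgroup.mem_inf, Subgroup.mem_inf] at hmem
    exact ⟨mem_ptStab.mp hmem.1.2 x rfl, mem_ptStab.mp hmem.2 x' rfl,
      perm_dist hconn _ (hG _ hmem.1.1)⟩
  refine ⟨⟨?_, ?_⟩, ?_, ?_⟩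
  · -- (i) containment
    unfold Theta
    apply Subgroup.map_mono
    intro γ hγ
    rw [Subgroup.mem_comap, mem_ptStab] at hγ ⊢
    simp only [Subgroup.coe_subtype] at hγ ⊢
    intro z hz
    rw [Set.mem_singleton_iff] at hz
    subst hz
    exact (fix_of_fix_B hconn hacyc hthick (hfacts γ).2.2 (hfacts γ).1 hxv i
      (fun u h1 h2 => hγ u ⟨h1, h2⟩)).1
  · -- (i) normality
    intro a ha m hm
    unfold Theta at hm ⊢
    obtain ⟨h, hh, rfl⟩ := Subgroup.mem_map.mp ha
    obtain ⟨g, hg, rfl⟩ := Subgroup.mem_map.mp hm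
    rw [Subgroup.mem_comap, mem_ptStab] at hh
    simp only [Subgroup.coe_subtype] at hh
    have hv : (h : Equiv.Perm V) v = v := hh v rfl
    exact Subgroup.mem_map.mpr ⟨h * g * h⁻¹,
      conj_mem_K hconn hG x x' h g v i hv hg,
      by rw [map_mul, map_mul, map_inv]⟩
  · -- (ii)
    intro w hvw hwx
    refine ⟨?_, (theta_step hconn hacyc hthick hG x x' v w res hxv hvw hwx i).1,
      (theta_step hconn hacyc hthick hG x x' v w res hxv hvw hwx i).2⟩
    ext u
    simp only [Set.mem_setOf_eq]
    constructor
    · rintro ⟨h1, h2⟩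
      exact ⟨h1, (sphere_iff hconn hacyc hxv hvw hwx h1).mp h2⟩
    · rintro ⟨h1, h2⟩
      exact ⟨h1, (sphere_iff hconn hacyc hxv hvw hwx h1).mpr h2⟩
  · -- (iii) subnormality
    obtain ⟨P, hP, hPl⟩ := hconn.exists_path_of_dist x v
    obtain ⟨n, hn⟩ : ∃ n, T.dist x v = n := ⟨_, rfl⟩
    have hn1 : 1 ≤ n := by
      have := hconn.pos_dist_of_ne hxv
      omega
    rw [hn] at hPl
    have hdk : ∀ k, k ≤ n → T.dist x (P.getVert k) = k ∧ T.dist (P.getVert k) v = n - k := by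
      intro k hk
      have := geo_getVert_dist hconn hacyc P hP (k := k) (by omega : k ≤ P.length)
      rw [hPl] at this
      exact this
    have hyn : P.getVert n = v := by
      rw [← hPl]
      exact P.getVert_length
    have hy1 : P.getVert 1 = x' := by
      have hxx' : T.dist x x' = 1 := SimpleGraph.dist_eq_one_iff_adj.mpr hadj
      have b1 : TBtw T x x' v := by unfold TBtw; omega
      have b2 : TBtw T x (P.getVert 1) v := by
        obtain ⟨d1, d2⟩ := hdk 1 hn1
        unfold TBtw; omega
      refine btw_unique hconn hacyc b2 b1 ?_
      obtain ⟨d1, d2⟩ := hdk 1 hn1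
      omega
    refine ⟨n, fun j => if j < n then Theta T G x x' res (P.getVert (n - j)) i
      else res.range, ?_, ?_, ?_⟩
    · simp only [if_pos (show 0 < n by omega), Nat.sub_zero, hyn]
    · simp only [if_neg (lt_irrefl n)]
    · intro j hj
      by_cases hj1 : j + 1 < n
      · simp only [if_pos hj, if_pos hj1]
        have hxne : x ≠ P.getVert (n - (j + 1)) := by
          intro he
          have hd := (hdk (n - (j + 1)) (by omega)).1
          rw [← he, SimpleGraph.dist_self] at hd
          omega
        have hadj' : T.Adj (P.getVert (n - (j + 1))) (P.getVert (n - j)) := by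
          have h2 := P.adj_getVert_succ (i := n - (j + 1)) (by omega)
          have he : n - (j + 1) + 1 = n - j := by omega
          rwa [he] at h2
        have hd' : T.dist (P.getVert (n - j)) x = T.dist (P.getVert (n - (j + 1))) x + 1 := by
          have d1 := (hdk (n - j) (by omega)).1
          have d2 := (hdk (n - (j + 1)) (by omega)).1
          have c1 : T.dist (P.getVert (n - j)) x = T.dist x (P.getVert (n - j)) :=
            SimpleGraph.dist_comm
          have c2 : T.dist (P.getVert (n - (j + 1))) x = T.dist x (P.getVert (n - (j + 1))) :=
            SimpleGraph.dist_comm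
          omega
        exact theta_step hconn hacyc hthick hG x x' _ _ res hxne hadj' hd' i
      · simp only [if_pos hj, if_neg hj1]
        have hnj : n - j = 1 := by omega
        rw [hnj, hy1]
        constructor
        · intro a ha
          unfold Theta at ha
          obtain ⟨γ, -, rfl⟩ := Subgroup.mem_map.mp ha
          exact MonoidHom.mem_range.mpr ⟨γ, rfl⟩
        · intro a ha m hm
          unfold Theta at hm ⊢
          obtain ⟨h, rfl⟩ := MonoidHom.mem_range.mp ha
          obtain ⟨g, hg, rfl⟩ := Subgroup.mem_map.mp hm
          exact Subgroup.mem_map.mpr ⟨h * g * h⁻¹,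
            conj_mem_K hconn hG x x' h g x' i (hfacts h).2.1 hg,
            by rw [map_mul, map_mul, map_inv]⟩
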